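/- For every integer n ≥ 2 and every a > 0, the vertical height h_R(a) = 2·sinh^{n−1}(a) · ∫_a^∞ (sinh^{2n−2}(u) − sinh^{2n−2}(a))^{−1/2} du of the n-dimensional catenoid C_a satisfies h_R(a) < π / (n−1). -/

import Mathlib

open MeasureTheory

private lemma catenoid_deriv (m : ℕ) (hm : 1 ≤ m) (a : ℝ) (ha : 0 < a)
    {u : ℝ} (hu : a < u) :
    HasDerivAt (fun x : ℝ => -Real.arcsin (Real.sinh a ^ m / Real.sinh x ^ m))
      ((m : ℝ) * Real.sinh a ^ m * Real.cosh u /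
        (Real.sinh u * Real.sqrt ((Real.sinh u ^ m) ^ 2 - (Real.sinh a ^ m) ^ 2))) u := by
  have hsa : 0 < Real.sinh a := Real.sinh_pos_iff.2 ha
  have hsu : 0 < Real.sinh u := Real.sinh_pos_iff.2 (ha.trans hu)
  have hlt : Real.sinh a < Real.sinh u := Real.sinh_lt_sinh.2 hu
  have hclt : Real.sinh a ^ m < Real.sinh u ^ m :=
    pow_lt_pow_left₀ hlt hsa.le (by omega)
  have hc : 0 < Real.sinh a ^ m := pow_pos hsa m
  have hs : 0 < Real.sinh u ^ m := pow_pos hsu m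
  set c := Real.sinh a ^ m with hc_def
  set s := Real.sinh u ^ m with hs_def
  have hh0 : 0 < c / s := div_pos hc hs
  have hh1 : c / s < 1 := (div_lt_one hs).2 hclt
  have hpow : HasDerivAt (fun x : ℝ => Real.sinh x ^ m)
      ((m : ℝ) * Real.sinh u ^ (m - 1) * Real.cosh u) u :=
    (Real.hasDerivAt_sinh u).pow m
  have hinner : HasDerivAt (fun x : ℝ => c / Real.sinh x ^ m)
      ((0 * s - c * ((m : ℝ) * Real.sinh u ^ (m - 1) * Real.cosh u)) / s ^ 2) u :=
    (hasDerivAt_const u c).div hpow hs.ne'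
  have harcsin : HasDerivAt Real.arcsin (1 / Real.sqrt (1 - (c / s) ^ 2)) (c / s) :=
    Real.hasDerivAt_arcsin (by nlinarith) (ne_of_lt hh1)
  have hcomp : HasDerivAt (fun x : ℝ => -Real.arcsin (c / Real.sinh x ^ m))
      (-(1 / Real.sqrt (1 - (c / s) ^ 2) *
        ((0 * s - c * ((m : ℝ) * Real.sinh u ^ (m - 1) * Real.cosh u)) / s ^ 2))) u :=
    by have h0 := harcsin.comp u hinner; exact h0.neg
  convert hcomp using 1
  have hdiff : 0 < s ^ 2 - c ^ 2 := by nlinarith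
  have hsqrt_pos : 0 < Real.sqrt (s ^ 2 - c ^ 2) := Real.sqrt_pos.2 hdiff
  have key : Real.sqrt (1 - (c / s) ^ 2) = Real.sqrt (s ^ 2 - c ^ 2) / s := by
    rw [show 1 - (c / s) ^ 2 = (s ^ 2 - c ^ 2) / s ^ 2 by field_simp,
      Real.sqrt_div hdiff.le, Real.sqrt_sq hs.le]
  rw [key]
  have hsm : Real.sinh u ^ m = Real.sinh u ^ (m - 1) * Real.sinh u := by
    rw [← pow_succ]; congr 1; omega
  rw [hs_def] at *
  field_simp
  rw [hsm]
  ring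

theorem stmt_10 (n : ℕ) (hn : 2 ≤ n) (a : ℝ) (ha : 0 < a) :
    2 * (Real.sinh a ^ (n - 1) *
        ∫ u in Set.Ioi a,
          1 / Real.sqrt (Real.sinh u ^ (2 * n - 2) - Real.sinh a ^ (2 * n - 2))) <
      Real.pi / ((n : ℝ) - 1) := by
  have hsa : 0 < Real.sinh a := Real.sinh_pos_iff.2 ha
  set m : ℕ := n - 1 with hm_def
  have hm : 1 ≤ m := by omega
  have h2 : 2 * n - 2 = m * 2 := by omega
  set c := Real.sinh a ^ m with hc_def
  have hc : 0 < c := pow_pos hsa m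
  simp_rw [h2, pow_mul]
  set f : ℝ → ℝ := fun u => 1 / Real.sqrt ((Real.sinh u ^ m) ^ 2 - c ^ 2) with hf_def
  set g : ℝ → ℝ := fun x => -Real.arcsin (c / Real.sinh x ^ m) with hg_def
  set g' : ℝ → ℝ := fun u =>
    (m : ℝ) * c * Real.cosh u /
      (Real.sinh u * Real.sqrt ((Real.sinh u ^ m) ^ 2 - c ^ 2)) with hg'_def
  -- basic facts on Ioi a
  have hfacts : ∀ u ∈ Set.Ioi a, 0 < Real.sinh u ∧ 0 < (Real.sinh u ^ m) ^ 2 - c ^ 2 := by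
    intro u hu
    have hsu : 0 < Real.sinh u := Real.sinh_pos_iff.2 (ha.trans hu)
    have hlt : c < Real.sinh u ^ m :=
      pow_lt_pow_left₀ (Real.sinh_lt_sinh.2 hu) hsa.le (by omega)
    exact ⟨hsu, by nlinarith⟩
  have hderiv : ∀ u ∈ Set.Ioi a, HasDerivAt g (g' u) u := fun u hu =>
    catenoid_deriv m hm a ha hu
  have hg'pos : ∀ u ∈ Set.Ioi a, 0 < g' u := by
    intro u hu
    obtain ⟨hsu, hd⟩ := hfacts u hu
    exact div_pos (by positivity) (mul_pos hsu (Real.sqrt_pos.2 hd))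
  have hcont : ContinuousWithinAt g (Set.Ici a) a := by
    apply ContinuousAt.continuousWithinAt
    exact (Real.continuous_arcsin.continuousAt.comp
      (continuousAt_const.div (Real.continuous_sinh.continuousAt.pow m)
        (pow_pos hsa m).ne')).neg
  have htend : Filter.Tendsto g Filter.atTop (nhds 0) := by
    have hsinh : Filter.Tendsto Real.sinh Filter.atTop Filter.atTop := by
      apply Filter.tendsto_atTop_mono' _ _ Filter.tendsto_id
      filter_upwards [Filter.eventually_gt_atTop 0] with x hx
      exact (Real.self_lt_sinh_iff.2 hx).le
    have h1 : Filter.Tendsto (fun u : ℝ => Real.sinh u ^ m) Filter.atTop Filter.atTop :=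
      (Filter.tendsto_pow_atTop (by omega : m ≠ 0)).comp hsinh
    have h2 : Filter.Tendsto (fun u : ℝ => c / Real.sinh u ^ m) Filter.atTop (nhds 0) :=
      Filter.Tendsto.div_atTop tendsto_const_nhds h1
    have h3 := (Real.continuous_arcsin.tendsto 0).comp h2
    rw [Real.arcsin_zero] at h3
    simpa [hg_def] using h3.neg
  have hg'int : IntegrableOn g' (Set.Ioi a) :=
    integrableOn_Ioi_deriv_of_nonneg hcont hderiv (fun u hu => (hg'pos u hu).le) htend
  have hint : ∫ u in Set.Ioi a, g' u = 0 - g a := by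
    exact integral_Ioi_of_hasDerivAt_of_nonneg hcont hderiv
      (fun u hu => (hg'pos u hu).le) htend
  have hga : g a = -(Real.pi / 2) := by
    simp [hg_def, hc_def, div_self (pow_pos hsa m).ne', Real.arcsin_one]
  rw [hga, zero_sub, neg_neg] at hint
  -- pointwise strict comparison
  have hcomp : ∀ u ∈ Set.Ioi a, (m : ℝ) * c * f u < g' u := by
    intro u hu
    obtain ⟨hsu, hd⟩ := hfacts u hu
    have hsq : 0 < Real.sqrt ((Real.sinh u ^ m) ^ 2 - c ^ 2) := Real.sqrt_pos.2 hd
    have hch : Real.sinh u < Real.cosh u := Real.sinh_lt_cosh u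
    simp only [hf_def, hg'_def]
    rw [mul_one_div, div_lt_div_iff₀ (by positivity) (by positivity)]
    have hmc : 0 < (m : ℝ) * c := by positivity
    nlinarith [mul_pos hmc hsq, mul_pos (mul_pos hmc hsq) (sub_pos.2 hch)]
  -- f continuous on Ioi a, hence ae strongly measurable
  have hfcont : ContinuousOn f (Set.Ioi a) := by
    apply ContinuousOn.div continuousOn_const
    · exact (Real.continuous_sqrt.comp
        (((Real.continuous_sinh.pow m).pow 2).sub continuous_const)).continuousOn
    · intro u hu
      exact (Real.sqrt_pos.2 (hfacts u hu).2).ne'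
  have hFmeas : AEStronglyMeasurable (fun u => (m : ℝ) * c * f u)
      (volume.restrict (Set.Ioi a)) :=
    (continuousOn_const.mul hfcont).aestronglyMeasurable measurableSet_Ioi
  have hFint : IntegrableOn (fun u => (m : ℝ) * c * f u) (Set.Ioi a) := by
    refine Integrable.mono hg'int hFmeas ?_
    rw [ae_restrict_iff' measurableSet_Ioi]
    filter_upwards with u hu
    have h1 := hcomp u hu
    have h2 : 0 ≤ (m : ℝ) * c * f u := by
      have := (hfacts u hu).2
      have : 0 ≤ f u := by positivity
      positivity
    rw [Real.norm_eq_abs, Real.norm_eq_abs, abs_of_nonneg h2,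
      abs_of_nonneg (hg'pos u hu).le]
    exact h1.le
  -- strict integral inequality
  have hstrict : ∫ u in Set.Ioi a, (m : ℝ) * c * f u < ∫ u in Set.Ioi a, g' u := by
    have hsub : IntegrableOn (fun u => g' u - (m : ℝ) * c * f u) (Set.Ioi a) :=
      hg'int.sub hFint
    have hpos : 0 < ∫ u in Set.Ioi a, (g' u - (m : ℝ) * c * f u) := by
      rw [setIntegral_pos_iff_support_of_nonneg_ae]
      · have hsubset : Set.Ioi a ⊆
            (Function.support fun u => g' u - (m : ℝ) * c * f u) ∩ Set.Ioi a := fun u hu =>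
          ⟨Function.mem_support.2 (sub_pos.2 (hcomp u hu)).ne', hu⟩
        calc (0 : ENNReal) < volume (Set.Ioi a) := by simp [Real.volume_Ioi]
          _ ≤ _ := measure_mono hsubset
      · rw [Filter.EventuallyLE, ae_restrict_iff' measurableSet_Ioi]
        filter_upwards with u hu
        exact (sub_pos.2 (hcomp u hu)).le
      · exact hsub
    have := integral_sub hg'int hFint
    rw [this] at hpos
    linarith
  rw [hint] at hstrict
  rw [integral_const_mul] at hstrict
  -- conclusion
  have hI : (m : ℝ) * c * (∫ u in Set.Ioi a, f u) < Real.pi / 2 := by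
    rw [mul_assoc] at hstrict ⊢
    exact hstrict
  have hmR : (0:ℝ) < (m : ℝ) := by exact_mod_cast hm
  have hcast : (n : ℝ) - 1 = (m : ℝ) := by
    rw [hm_def]
    push_cast [Nat.cast_sub (by omega : 1 ≤ n)]
    ring
  rw [hcast, lt_div_iff₀ hmR]
  nlinarith [hI]
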